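/- If H is a graph with |V(H)| ≥ 3, then tw(C(H)) = |V(H)| − 1, where C(H) is the 1-completion of H. -/

import Mathlib

open SimpleGraph

structure TreeDecomp {V : Type} (G : SimpleGraph V) where
  ι : Type
  tree : SimpleGraph ι
  isTree : tree.IsTree
  bag : ι → Finset V
  covers_edge : ∀ ⦃u v : V⦄, G.Adj u v → ∃ t, u ∈ bag t ∧ v ∈ bag t
  support_connected : ∀ v : V, (tree.induce {t | v ∈ bag t}).Connected

noncomputable def indepNum {V : Type} (G : SimpleGraph V) (s : Set V) : ℕ :=
  sSup {n | ∃ t : Finset V, ↑t ⊆ s ∧ (↑t : Set V).Pairwise (fun a b => ¬ G.Adj a b) ∧ t.card = n}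

noncomputable def alpha {V : Type} (G : SimpleGraph V) : ℕ := indepNum G Set.univ

noncomputable def chiNat {V : Type} (G : SimpleGraph V) : ℕ := G.chromaticNumber.toNat

noncomputable def tw {V : Type} (G : SimpleGraph V) : ℕ :=
  sInf {w | ∃ D : TreeDecomp G, ∀ t, (D.bag t).card ≤ w + 1}

noncomputable def treeAlpha {V : Type} (G : SimpleGraph V) : ℕ :=
  sInf {k | ∃ D : TreeDecomp G, ∀ t, indepNum G ↑(D.bag t) ≤ k}

noncomputable def treeChi {V : Type} (G : SimpleGraph V) : ℕ :=
  sInf {k | ∃ D : TreeDecomp G, ∀ t, chiNat (G.induce ↑(D.bag t)) ≤ k}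

noncomputable def treeTw {V : Type} (G : SimpleGraph V) : ℕ :=
  sInf {k | ∃ D : TreeDecomp G, ∀ t, tw (G.induce ↑(D.bag t)) ≤ k}

noncomputable def omegaNum {V : Type} (G : SimpleGraph V) : ℕ :=
  sSup {n | ∃ t : Finset V, G.IsClique ↑t ∧ t.card = n}

def completion {V : Type} (H : SimpleGraph V) :
    SimpleGraph (V ⊕ {p : Sym2 V // ¬ p.IsDiag ∧ p ∉ H.edgeSet}) :=
  SimpleGraph.fromRel (fun x y =>
    match x, y with
    | .inl u, .inl v => H.Adj u v
    | .inl u, .inr p => u ∈ p.1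
    | _, _ => False)


section TreeLemmas

attribute [local instance] Classical.propDecidable

variable {ι : Type} {T : SimpleGraph ι}

lemma path_eq (hT : T.IsTree) {a b : ι} {P Q : T.Walk a b} (hP : P.IsPath) (hQ : Q.IsPath) :
    P = Q :=
  (hT.existsUnique_path a b).unique hP hQ

lemma path_support_subset (hT : T.IsTree) {a b : ι} {P : T.Walk a b} (hP : P.IsPath)
    (W : T.Walk a b) : ∀ x ∈ P.support, x ∈ W.support := by
  intro x hx
  have h : P = W.bypass := path_eq hT hP W.bypass_isPath
  exact W.support_bypass_subset (h ▸ hx)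

/-- convexity wrt paths -/
def Cx (T : SimpleGraph ι) (s : Set ι) : Prop :=
  ∀ a ∈ s, ∀ b ∈ s, ∀ W : T.Walk a b, W.IsPath → ∀ x ∈ W.support, x ∈ s

lemma cx_inter {s t : Set ι} (hs : Cx T s) (ht : Cx T t) : Cx T (s ∩ t) := by
  intro a ha b hb W hW x hx
  exact ⟨hs a ha.1 b hb.1 W hW x hx, ht a ha.2 b hb.2 W hW x hx⟩

noncomputable def pathB (hT : T.IsTree) (a b : ι) : T.Walk a b :=
  (hT.isConnected.preconnected a b).some.bypass

lemma pathB_isPath (hT : T.IsTree) (a b : ι) : (pathB hT a b).IsPath :=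
  Walk.bypass_isPath _

lemma isPath_append {u v w : ι} {p : T.Walk u v} {q : T.Walk v w} (hp : p.IsPath)
    (hq : q.IsPath) (hd : ∀ x ∈ p.support, x ∈ q.support → x = v) : (p.append q).IsPath := by
  rw [Walk.isPath_def, Walk.support_append, List.nodup_append]
  refine ⟨hp.support_nodup, hq.support_nodup.tail, ?_⟩
  intro x hxp x' hxq hxx
  subst hxx
  have hxv : x = v := hd x hxp (List.mem_of_mem_tail hxq)
  subst hxv
  have := hq.support_nodup
  rw [q.support_eq_cons] at this
  exact (List.nodup_cons.mp this).1 hxq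

lemma exists_decomp {x y : ι} (W : T.Walk x y) (S : Set ι) (hy : y ∈ S) :
    ∃ (m : ι) (W1 : T.Walk x m) (W2 : T.Walk m y),
      m ∈ S ∧ W = W1.append W2 ∧ ∀ z ∈ W1.support, z ∈ S → z = m := by
  induction W with
  | @nil u =>
    exact ⟨u, Walk.nil, Walk.nil, hy, rfl, by intro z hz _; simpa using hz⟩
  | @cons u v w h p ih =>
    by_cases hu : u ∈ S
    · refine ⟨u, Walk.nil, Walk.cons h p, hu, rfl, ?_⟩
      intro z hz _; simpa using hz
    · obtain ⟨m, W1, W2, hm, hEq, hprop⟩ := ih hy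
      refine ⟨m, Walk.cons h W1, W2, hm, by rw [hEq]; rfl, ?_⟩
      intro z hz hzS
      rw [Walk.support_cons] at hz
      rcases List.mem_cons.mp hz with rfl | hz'
      · exact absurd hzS hu
      · exact hprop z hz' hzS

lemma median (hT : T.IsTree) {a b c : ι} (P : T.Walk a b) (Q : T.Walk a c) (R : T.Walk b c)
    (hP : P.IsPath) (hQ : Q.IsPath) (hR : R.IsPath) :
    ∃ m, m ∈ P.support ∧ m ∈ Q.support ∧ m ∈ R.support := by
  obtain ⟨m, W1, W2, hm, hEq, hprop⟩ :=
    exists_decomp R.reverse {z | z ∈ P.support} (by simp [Walk.end_mem_support])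
  have hm' : m ∈ P.support := hm
  have hRrev : R.reverse.IsPath := hR.reverse
  have hW1 : W1.IsPath := by
    rw [hEq] at hRrev; exact hRrev.of_append_left
  refine ⟨m, hm', ?_, ?_⟩
  · -- m ∈ Q.support
    have h1 : (P.takeUntil m hm').IsPath := hP.takeUntil hm'
    have hApath : ((P.takeUntil m hm').append W1.reverse).IsPath := by
      refine isPath_append h1 hW1.reverse ?_
      intro z hz1 hz2
      have hzP : z ∈ P.support := Walk.support_takeUntil_subset _ _ hz1
      rw [Walk.support_reverse, List.mem_reverse] at hz2
      exact hprop z hz2 hzP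
    have hQA : Q = (P.takeUntil m hm').append W1.reverse := path_eq hT hQ hApath
    rw [hQA, Walk.mem_support_append_iff]
    exact Or.inl (Walk.end_mem_support _)
  · -- m ∈ R.support
    have : m ∈ R.reverse.support := by
      rw [hEq, Walk.mem_support_append_iff]
      exact Or.inl (Walk.end_mem_support _)
    rwa [Walk.support_reverse, List.mem_reverse] at this

lemma three_sets (hT : T.IsTree) {s1 s2 s3 : Set ι} (h1 : Cx T s1) (h2 : Cx T s2) (h3 : Cx T s3)
    (h23 : (s2 ∩ s3).Nonempty) (h13 : (s1 ∩ s3).Nonempty) (h12 : (s1 ∩ s2).Nonempty) :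
    ∃ m, m ∈ s1 ∧ m ∈ s2 ∧ m ∈ s3 := by
  obtain ⟨a, ha2, ha3⟩ := h23
  obtain ⟨b, hb1, hb3⟩ := h13
  obtain ⟨c, hc1, hc2⟩ := h12
  obtain ⟨m, hmP, hmQ, hmR⟩ := median hT (pathB hT a b) (pathB hT a c) (pathB hT b c)
    (pathB_isPath hT a b) (pathB_isPath hT a c) (pathB_isPath hT b c)
  exact ⟨m, h1 b hb1 c hc1 _ (pathB_isPath hT b c) m hmR,
    h2 a ha2 c hc2 _ (pathB_isPath hT a c) m hmQ,
    h3 a ha3 b hb3 _ (pathB_isPath hT a b) m hmP⟩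

lemma helly_aux (hT : T.IsTree) :
    ∀ (n : ℕ) (l : List (Set ι)), l.length ≤ n → (∀ s ∈ l, Cx T s) →
      (∀ s ∈ l, ∀ u ∈ l, (s ∩ u).Nonempty) → l ≠ [] → ∃ x, ∀ s ∈ l, x ∈ s := by
  intro n
  induction n with
  | zero =>
    intro l hl _ _ hne
    cases l with
    | nil => exact absurd rfl hne
    | cons a l => simp at hl
  | succ n ih =>
    intro l hl hcx hint hne
    match l with
    | [s] =>
      obtain ⟨x, hx, _⟩ := hint s (by simp) s (by simp)
      exact ⟨x, by rintro u hu; rw [List.mem_singleton] at hu; subst hu; exact hx⟩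
    | s1 :: s2 :: r =>
      have hmem1 : s1 ∈ s1 :: s2 :: r := by simp
      have hmem2 : s2 ∈ s1 :: s2 :: r := by simp
      have hcx1 := hcx s1 hmem1
      have hcx2 := hcx s2 hmem2
      obtain ⟨x, hx⟩ := ih ((s1 ∩ s2) :: r) (by simpa using Nat.le_of_succ_le_succ hl)
        (by
          rintro s hs
          rcases List.mem_cons.mp hs with rfl | hs'
          · exact cx_inter hcx1 hcx2
          · exact hcx s (by simp [hs']))
        (by
          rintro s hs u hu
          rcases List.mem_cons.mp hs with rfl | hs' <;>
            rcases List.mem_cons.mp hu with rfl | hu'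
          · exact (hint s1 hmem1 s2 hmem2).mono (by intro z hz; exact ⟨⟨hz.1, hz.2⟩, hz.1, hz.2⟩)
          · obtain ⟨m, hm1, hm2, hmu⟩ := three_sets hT hcx1 hcx2 (hcx u (by simp [hu']))
              (hint s2 hmem2 u (by simp [hu'])) (hint s1 hmem1 u (by simp [hu']))
              (hint s1 hmem1 s2 hmem2)
            exact ⟨m, ⟨hm1, hm2⟩, hmu⟩
          · obtain ⟨m, hm1, hm2, hms⟩ := three_sets hT hcx1 hcx2 (hcx s (by simp [hs']))
              (hint s2 hmem2 s (by simp [hs'])) (hint s1 hmem1 s (by simp [hs']))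
              (hint s1 hmem1 s2 hmem2)
            exact ⟨m, hms, hm1, hm2⟩
          · exact hint s (by simp [hs']) u (by simp [hu']))
        (by simp)
      refine ⟨x, ?_⟩
      have hx12 := hx (s1 ∩ s2) (by simp)
      rintro s hs
      rcases List.mem_cons.mp hs with rfl | hs'
      · exact hx12.1
      rcases List.mem_cons.mp hs' with rfl | hs''
      · exact hx12.2
      · exact hx s (by simp [hs''])

lemma cx_union_family (hT : T.IsTree) {κ : Type} (s : Set ι) (t : κ → Set ι) (hs : Cx T s)
    (ht : ∀ k, Cx T (t k)) (hm : ∀ k, (s ∩ t k).Nonempty) :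
    Cx T (s ∪ ⋃ k, t k) := by
  have key : ∀ a ∈ s ∪ ⋃ k, t k, ∃ c : Set ι, a ∈ c ∧ Cx T c ∧ (c ⊆ s ∪ ⋃ k, t k) ∧
      ∃ xa, xa ∈ s ∧ xa ∈ c := by
    intro a ha
    rcases ha with ha | ha
    · exact ⟨s, ha, hs, Set.subset_union_left, a, ha, ha⟩
    · obtain ⟨k, hk⟩ := Set.mem_iUnion.mp ha
      obtain ⟨xa, hxa1, hxa2⟩ := hm k
      exact ⟨t k, hk, ht k, (Set.subset_iUnion t k).trans Set.subset_union_right, xa, hxa1, hxa2⟩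
  intro a ha b hb W hW x hx
  obtain ⟨ca, ha', hca, hcas, xa, hxas, hxaca⟩ := key a ha
  obtain ⟨cb, hb', hcb, hcbs, xb, hxbs, hxbcb⟩ := key b hb
  have hx' : x ∈ ((pathB hT a xa).append ((pathB hT xa xb).append (pathB hT xb b))).support :=
    path_support_subset hT hW _ x hx
  rw [Walk.mem_support_append_iff, Walk.mem_support_append_iff] at hx'
  rcases hx' with h1 | h2 | h3
  · exact hcas (hca a ha' xa hxaca _ (pathB_isPath _ _ _) x h1)
  · exact Or.inl (hs xa hxas xb hxbs _ (pathB_isPath _ _ _) x h2)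
  · exact hcbs (hcb xb hxbcb b hb' _ (pathB_isPath _ _ _) x h3)

end TreeLemmas

section StarTree

def starG (κ : Type) : SimpleGraph (Option κ) := SimpleGraph.fromRel (fun a _ => a = none)

lemma starG_adj {κ : Type} {a b : Option κ} :
    (starG κ).Adj a b ↔ a ≠ b ∧ (a = none ∨ b = none) := by
  rw [starG, SimpleGraph.fromRel_adj]

lemma starG_edge_mem {κ : Type} {x y : Option κ} (W : (starG κ).Walk x y) :
    ∀ k : κ, y = some k → x ≠ some k → s(none, some k) ∈ W.edges := by
  induction W with
  | @nil u =>
    intro k hy hx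
    exact absurd hy hx
  | @cons u v w h p ih =>
    intro k hy hx
    by_cases hv : v = some k
    · subst hv
      rcases (starG_adj.mp h).2 with h1 | h1
      · subst h1
        rw [Walk.edges_cons]
        exact List.mem_cons_self
      · exact absurd h1 (by simp)
    · rw [Walk.edges_cons]
      exact List.mem_cons_of_mem _ (ih k hy hv)

lemma starG_isTree (κ : Type) : (starG κ).IsTree := by
  have key : ∀ c : Option κ, (starG κ).Reachable c none := by
    intro c
    cases c with
    | none => exact SimpleGraph.Reachable.refl _
    | some k => exact (starG_adj.mpr ⟨by simp, Or.inr rfl⟩).reachable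
  constructor
  · have : Nonempty (Option κ) := ⟨none⟩
    exact ⟨fun a b => (key a).trans (key b).symm⟩
  · rw [isAcyclic_iff_forall_adj_isBridge]
    intro v w hvw
    rw [isBridge_iff_adj_and_forall_walk_mem_edges]
    refine fun p => ?_
    obtain ⟨hne, h1 | h1⟩ := starG_adj.mp hvw
    · subst h1
      cases w with
      | none => exact absurd rfl hne
      | some k => exact starG_edge_mem p k rfl (by simp)
    · subst h1
      cases v with
      | none => exact absurd rfl hne
      | some k =>
        have h2 := starG_edge_mem p.reverse k rfl (by simp)
        rw [Walk.edges_reverse, List.mem_reverse] at h2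
        rwa [Sym2.eq_swap] at h2

end StarTree

section Main

attribute [local instance] Classical.propDecidable

variable {V : Type} [Fintype V]

lemma sym2_mem_out {α : Type} {p : Sym2 α} {a : α} (h : a ∈ p) :
    a = p.out.1 ∨ a = p.out.2 := by
  have h2 : s(p.out.1, p.out.2) = p := by rw [Sym2.mk]; exact p.out_eq
  rw [← h2] at h
  exact Sym2.mem_iff.mp h

lemma completion_adj_inl_inl {H : SimpleGraph V} {u v : V} (h : H.Adj u v) :
    (completion H).Adj (Sum.inl u) (Sum.inl v) := by
  rw [completion, SimpleGraph.fromRel_adj]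
  exact ⟨by simp [h.ne], Or.inl h⟩

lemma completion_adj_inl_inr {H : SimpleGraph V} (v : V)
    (p : {p : Sym2 V // ¬ p.IsDiag ∧ p ∉ H.edgeSet}) (h : v ∈ p.1) :
    (completion H).Adj (Sum.inl v) (Sum.inr p) := by
  rw [completion, SimpleGraph.fromRel_adj]
  exact ⟨by simp, Or.inl h⟩

lemma cx_bagSupport {W' : Type} {G : SimpleGraph W'} (D : TreeDecomp G) (w : W') :
    Cx D.tree {t | w ∈ D.bag t} := by
  intro a ha b hb Wk hWk x hx
  obtain ⟨Wi⟩ := (D.support_connected w).preconnected ⟨a, ha⟩ ⟨b, hb⟩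
  have hx' := path_support_subset D.isTree hWk
    (Wi.map (SimpleGraph.Embedding.induce {t | w ∈ D.bag t}).toHom) x hx
  erw [Walk.support_map] at hx'
  obtain ⟨y, _, hyx⟩ := List.mem_map.mp hx'
  exact hyx ▸ y.2

lemma support_nonempty {W' : Type} {G : SimpleGraph W'} (D : TreeDecomp G) (w : W') :
    ∃ t, w ∈ D.bag t := by
  obtain ⟨⟨t, ht⟩⟩ := (D.support_connected w).nonempty
  exact ⟨t, ht⟩

lemma lower_bound {H : SimpleGraph V} (hV : 3 ≤ Fintype.card V)
    (D : TreeDecomp (completion H)) : ∃ t, Fintype.card V ≤ (D.bag t).card := by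
  set κ := {p : Sym2 V // ¬ p.IsDiag ∧ p ∉ H.edgeSet}
  let pick : κ → V := fun p => p.1.out.1
  have hpick : ∀ p : κ, pick p ∈ p.1 := fun p => Sym2.out_fst_mem p.1
  let Tv : V → Set D.ι := fun v => {t | Sum.inl v ∈ D.bag t}
  let Tp : κ → Set D.ι := fun p => {t | Sum.inr p ∈ D.bag t}
  let S : V → Set D.ι := fun v => Tv v ∪ ⋃ q : {p : κ // pick p = v}, Tp q.1
  have hScx : ∀ v, Cx D.tree (S v) := by
    intro v
    show Cx D.tree (Tv v ∪ ⋃ q : {p : κ // pick p = v}, Tp q.1)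
    refine cx_union_family D.isTree _ _ (cx_bagSupport D (Sum.inl v))
      (fun q => cx_bagSupport D (Sum.inr q.1)) ?_
    rintro ⟨p, hp⟩
    have hadj : (completion H).Adj (Sum.inl v) (Sum.inr p) :=
      completion_adj_inl_inr v p (by rw [← hp]; exact hpick p)
    obtain ⟨t, ht1, ht2⟩ := D.covers_edge hadj
    exact ⟨t, ht1, ht2⟩
  have hTvne : ∀ v, ∃ t, t ∈ Tv v := fun v => support_nonempty D (Sum.inl v)
  have hSint : ∀ u v : V, (S u ∩ S v).Nonempty := by
    intro u v
    by_cases huv : u = v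
    · subst huv
      obtain ⟨t, ht⟩ := hTvne u
      exact ⟨t, Set.mem_union_left _ ht, Set.mem_union_left _ ht⟩
    by_cases hadj : H.Adj u v
    · obtain ⟨t, h1, h2⟩ := D.covers_edge (completion_adj_inl_inl hadj)
      exact ⟨t, Set.mem_union_left _ h1, Set.mem_union_left _ h2⟩
    · refine ?_
      let p : κ := ⟨s(u, v), by rw [Sym2.mk_isDiag_iff]; exact huv,
        by rw [SimpleGraph.mem_edgeSet]; exact hadj⟩
      rcases Sym2.mem_iff.mp (hpick p) with he | he
      · obtain ⟨t, h1, h2⟩ := D.covers_edge (completion_adj_inl_inr v p (Sym2.mem_mk_right u v))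
        exact ⟨t, Set.mem_union_right _ (Set.mem_iUnion.mpr ⟨⟨p, he⟩, h2⟩),
          Set.mem_union_left _ h1⟩
      · obtain ⟨t, h1, h2⟩ := D.covers_edge (completion_adj_inl_inr u p (Sym2.mem_mk_left u v))
        exact ⟨t, Set.mem_union_left _ h1,
          Set.mem_union_right _ (Set.mem_iUnion.mpr ⟨⟨p, he⟩, h2⟩)⟩
  let l := (Finset.univ : Finset V).toList.map S
  have hmemS : ∀ v : V, S v ∈ l := fun v =>
    List.mem_map.mpr ⟨v, by simp [Finset.mem_toList], rfl⟩
  obtain ⟨x, hx⟩ := helly_aux D.isTree l.length l le_rfl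
    (by
      intro s hs
      obtain ⟨v, _, rfl⟩ := List.mem_map.mp hs
      exact hScx v)
    (by
      intro s hs u hu
      obtain ⟨v, _, rfl⟩ := List.mem_map.mp hs
      obtain ⟨v', _, rfl⟩ := List.mem_map.mp hu
      exact hSint v v')
    (by
      intro h
      have h2 := congrArg List.length h
      simp only [l, List.length_map, Finset.length_toList, List.length_nil,
        Finset.card_univ] at h2
      omega)
  have hwit : ∀ v : V, ∃ w, w ∈ D.bag x ∧
      (w = Sum.inl v ∨ ∃ p : κ, pick p = v ∧ w = Sum.inr p) := by
    intro v
    rcases hx (S v) (hmemS v) with hv | hv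
    · exact ⟨Sum.inl v, hv, Or.inl rfl⟩
    · obtain ⟨q, hq⟩ := Set.mem_iUnion.mp hv
      exact ⟨Sum.inr q.1, hq, Or.inr ⟨q.1, q.2, rfl⟩⟩
  choose f hf1 hf2 using hwit
  have hinj : Function.Injective f := by
    intro u v huv
    rcases hf2 u with h1 | ⟨p, hp, h1⟩ <;> rcases hf2 v with h2 | ⟨q, hq, h2⟩ <;>
      rw [h1, h2] at huv
    · exact Sum.inl_injective huv
    · simp at huv
    · simp at huv
    · cases Sum.inr_injective huv
      exact hp.symm.trans hq
  refine ⟨x, ?_⟩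
  calc Fintype.card V ≤ Fintype.card ↑(D.bag x) :=
        Fintype.card_le_of_injective (fun v => ⟨f v, hf1 v⟩)
          (fun a b h => hinj (congrArg Subtype.val h))
    _ = (D.bag x).card := Fintype.card_coe _

lemma upper_bound (H : SimpleGraph V) (hV : 3 ≤ Fintype.card V) :
    ∃ D : TreeDecomp (completion H), ∀ t, (D.bag t).card ≤ Fintype.card V := by
  set κ := {p : Sym2 V // ¬ p.IsDiag ∧ p ∉ H.edgeSet} with hκ
  let bag : Option κ → Finset (V ⊕ κ) := fun t =>
    match t with
    | none => Finset.univ.image Sum.inl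
    | some p => {Sum.inl p.1.out.1, Sum.inl p.1.out.2, Sum.inr p}
  have hinlmem : ∀ v : V, Sum.inl v ∈ bag none := fun v =>
    Finset.mem_image.mpr ⟨v, Finset.mem_univ v, rfl⟩
  have hbag_some : ∀ (w : V ⊕ κ) (q : κ), w ∈ bag (some q) ↔
      (w = Sum.inl q.1.out.1 ∨ w = Sum.inl q.1.out.2 ∨ w = Sum.inr q) := by
    intro w q
    show w ∈ insert (Sum.inl q.1.out.1) (insert (Sum.inl q.1.out.2) {Sum.inr q}) ↔ _
    rw [Finset.mem_insert, Finset.mem_insert, Finset.mem_singleton]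
  have hinlbag : ∀ (v : V) (p : κ), v ∈ p.1 → Sum.inl v ∈ bag (some p) := by
    intro v p hv
    rcases sym2_mem_out hv with h | h <;> subst h
    · exact (hbag_some _ _).mpr (Or.inl rfl)
    · exact (hbag_some _ _).mpr (Or.inr (Or.inl rfl))
  refine ⟨⟨Option κ, starG κ, starG_isTree κ, bag, ?_, ?_⟩, ?_⟩
  · -- covers_edge
    intro u v huv
    rw [completion, SimpleGraph.fromRel_adj] at huv
    obtain ⟨hne, h⟩ := huv
    cases u with
    | inl a =>
      cases v with
      | inl b => exact ⟨none, hinlmem a, hinlmem b⟩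
      | inr p =>
        have ha : a ∈ p.1 := by tauto
        exact ⟨some p, hinlbag a p ha, (hbag_some _ _).mpr (Or.inr (Or.inr rfl))⟩
    | inr p =>
      cases v with
      | inl b =>
        have hb : b ∈ p.1 := by tauto
        exact ⟨some p, (hbag_some _ _).mpr (Or.inr (Or.inr rfl)), hinlbag b p hb⟩
      | inr q => tauto
  · -- support_connected
    intro w
    cases w with
    | inl v =>
      have hnone : none ∈ {t | Sum.inl v ∈ bag t} := hinlmem v
      have key : ∀ a : ↑{t | Sum.inl v ∈ bag t},
          ((starG κ).induce {t | Sum.inl v ∈ bag t}).Reachable a ⟨none, hnone⟩ := by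
        rintro ⟨t, ht⟩
        cases t with
        | none =>
          have : (⟨none, ht⟩ : ↑{t | Sum.inl v ∈ bag t}) = ⟨none, hnone⟩ := Subtype.ext rfl
          rw [this]
        | some p =>
          refine SimpleGraph.Adj.reachable ?_
          show (starG κ).Adj (some p) none
          exact starG_adj.mpr ⟨by simp, Or.inr rfl⟩
      have : Nonempty ↑{t | Sum.inl v ∈ bag t} := ⟨⟨none, hnone⟩⟩
      exact ⟨fun a b => (key a).trans (key b).symm⟩
    | inr p =>
      have hp : some p ∈ {t | Sum.inr p ∈ bag t} := (hbag_some _ _).mpr (Or.inr (Or.inr rfl))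
      have heq : ∀ t ∈ {t | Sum.inr p ∈ bag t}, t = some p := by
        intro t ht
        cases t with
        | none =>
          exfalso
          obtain ⟨a, _, ha⟩ := Finset.mem_image.mp ht
          exact Sum.inl_ne_inr ha
        | some q =>
          rcases (hbag_some _ _).mp ht with h | h | h
          · exact absurd h Sum.inr_ne_inl
          · exact absurd h Sum.inr_ne_inl
          · rw [Sum.inr.injEq] at h
            rw [h]
      have : Nonempty ↑{t | Sum.inr p ∈ bag t} := ⟨⟨some p, hp⟩⟩
      refine ⟨fun a b => ?_⟩
      have hab : a = b := Subtype.ext ((heq _ a.2).trans (heq _ b.2).symm)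
      rw [hab]
  · -- card bounds
    intro t
    cases t with
    | none =>
      show (Finset.univ.image Sum.inl).card ≤ Fintype.card V
      rw [Finset.card_image_of_injective _ Sum.inl_injective, Finset.card_univ]
    | some p =>
      show ({Sum.inl p.1.out.1, Sum.inl p.1.out.2, Sum.inr p} : Finset (V ⊕ κ)).card ≤
        Fintype.card V
      calc ({Sum.inl p.1.out.1, Sum.inl p.1.out.2, Sum.inr p} : Finset (V ⊕ κ)).card
          ≤ ({Sum.inl p.1.out.2, Sum.inr p} : Finset (V ⊕ κ)).card + 1 :=
            Finset.card_insert_le _ _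
        _ ≤ (({Sum.inr p} : Finset (V ⊕ κ)).card + 1) + 1 :=
            Nat.add_le_add_right (Finset.card_insert_le _ _) 1
        _ ≤ Fintype.card V := by simp; omega

end Main

theorem stmt6 {V : Type} [Fintype V] (H : SimpleGraph V) (hV : 3 ≤ Fintype.card V) :
    tw (completion H) = Fintype.card V - 1 := by
  obtain ⟨D0, hD0⟩ := upper_bound H hV
  have hmem : (Fintype.card V - 1) ∈
      {w | ∃ D : TreeDecomp (completion H), ∀ t, (D.bag t).card ≤ w + 1} :=
    ⟨D0, fun t => (hD0 t).trans (by omega)⟩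
  have hle : tw (completion H) ≤ Fintype.card V - 1 := Nat.sInf_le hmem
  have hmem2 := Nat.sInf_mem ⟨_, hmem⟩
  obtain ⟨D, hD⟩ := hmem2
  obtain ⟨t, ht⟩ := lower_bound hV D
  have h2 := hD t
  have h3 : tw (completion H) =
      sInf {w | ∃ D : TreeDecomp (completion H), ∀ t, (D.bag t).card ≤ w + 1} := rfl
  rw [h3] at hle ⊢
  omega
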